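/- In the V expansion set 𝓑_V, every two-element vertex {b₁, b₂} (b₁ ≠ b₂ with disjoint supports) is the contraction basin of exactly two elements of 𝓑_V: the set {b ∈ 𝓑_V : Bas(b) = {b₁, b₂}} has exactly two members. -/

import Mathlib

/-- The Cantor set `X = ∏_{i=1}^∞ {0,1}`. -/
abbrev Cantor := ℕ → Bool

/-- The cylinder (ball) `B_ω`: all infinite binary sequences with prefix `ω`. -/
def cyl (ω : List Bool) : Set Cantor := {x | ∀ i : Fin ω.length, x i.1 = ω.get i}

/-- The prefix replacement `σ_{α}^{β} : B_α → B_β` (as a total function). -/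
def sigmaMap (α β : List Bool) : Cantor → Cantor :=
  fun x i => if h : i < β.length then β.get ⟨i, h⟩ else x (i - β.length + α.length)


lemma mem_cyl {ω : List Bool} {x : Cantor} :
    x ∈ cyl ω ↔ ∀ i, (h : i < ω.length) → x i = ω[i] := by
  constructor
  · intro hx i h; exact hx ⟨i, h⟩
  · intro hx i; exact hx i.1 i.2

lemma sigmaMap_apply (α β : List Bool) (x : Cantor) (i : ℕ) :
    sigmaMap α β x i = if h : i < β.length then β[i] else x (i - β.length + α.length) := rfl

lemma cyl_append_subset (a t : List Bool) : cyl (a ++ t) ⊆ cyl a := by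
  intro x hx
  rw [mem_cyl] at hx ⊢
  intro i h
  have h' : i < (a ++ t).length := by simp; omega
  have := hx i h'
  rwa [List.getElem_append_left h] at this

lemma sigma_mem {α t : List Bool} {x : Cantor} (β : List Bool) (hx : x ∈ cyl (α ++ t)) :
    sigmaMap α β x ∈ cyl (β ++ t) := by
  rw [mem_cyl] at hx ⊢
  intro i h
  rw [List.length_append] at h
  rw [sigmaMap_apply]
  split
  · next h' => rw [List.getElem_append_left h']
  · next h' =>
    have hlt : i - β.length + α.length < (α ++ t).length := by simp; omega
    have := hx _ hlt
    rw [this, List.getElem_append_right (by omega), List.getElem_append_right (by omega)]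
    congr 1; omega

lemma sigma_mem' {α : List Bool} {x : Cantor} (β : List Bool) (hx : x ∈ cyl α) :
    sigmaMap α β x ∈ cyl β := by
  have := sigma_mem (α := α) (t := []) β (by rwa [List.append_nil])
  rwa [List.append_nil] at this

lemma sigma_sigma (α β γ : List Bool) (x : Cantor) :
    sigmaMap β γ (sigmaMap α β x) = sigmaMap α γ x := by
  funext i
  simp only [sigmaMap_apply]
  split
  · rfl
  · next h =>
    rw [dif_neg (by omega)]
    congr 1; omega

lemma sigma_id {α : List Bool} {x : Cantor} (hx : x ∈ cyl α) : sigmaMap α α x = x := by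
  funext i
  rw [sigmaMap_apply]
  split
  · next h => exact (mem_cyl.mp hx i h).symm
  · next h => congr 1; omega

lemma sigma_inv {α β : List Bool} {x : Cantor} (hx : x ∈ cyl α) :
    sigmaMap β α (sigmaMap α β x) = x := by
  rw [sigma_sigma, sigma_id hx]

lemma sigma_surj {α β : List Bool} {y : Cantor} (hy : y ∈ cyl β) :
    ∃ x ∈ cyl α, sigmaMap α β x = y :=
  ⟨sigmaMap β α y, sigma_mem' α hy, sigma_inv hy⟩

lemma sigma_image (α β : List Bool) : sigmaMap α β '' cyl α = cyl β := by
  ext y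
  constructor
  · rintro ⟨x, hx, rfl⟩; exact sigma_mem' β hx
  · intro hy; obtain ⟨x, hx, hxy⟩ := sigma_surj (α := α) hy; exact ⟨x, hx, hxy⟩

lemma sigma_append (α β γ t : List Bool) (x : Cantor) :
    sigmaMap (β ++ t) γ (sigmaMap α β x) = sigmaMap (α ++ t) γ x := by
  funext i
  simp only [sigmaMap_apply, List.length_append]
  split
  · rfl
  · next h =>
    rw [dif_neg (by omega)]
    congr 1; omega

lemma sigma_snoc {α β : List Bool} {c : Bool} {x : Cantor} (hx : x ∈ cyl (α ++ [c])) :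
    sigmaMap (α ++ [c]) (β ++ [c]) x = sigmaMap α β x := by
  have hc : x α.length = c := by
    have := mem_cyl.mp hx α.length (by simp)
    simpa using this
  funext i
  simp only [sigmaMap_apply, List.length_append, List.length_singleton]
  rcases lt_trichotomy i β.length with h | h | h
  · rw [dif_pos (by omega), dif_pos h, List.getElem_append_left h]
  · rw [dif_pos (by omega), dif_neg (by omega)]
    have h1 : i - β.length + α.length = α.length := by omega
    have h2 : i - β.length = 0 := by omega
    rw [h1, hc, List.getElem_append_right (by omega)]
    simp [h2]
  · rw [dif_neg (by omega), dif_neg (by omega)]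
    congr 1; omega

lemma cyl_nonempty (ω : List Bool) : (cyl ω).Nonempty := by
  refine ⟨fun i => if h : i < ω.length then ω[i] else false, ?_⟩
  rw [mem_cyl]
  intro i h
  simp [h]

lemma exists_suffix_of_cyl_subset {d ω : List Bool} (h : cyl d ⊆ cyl ω) :
    ∃ t, d = ω ++ t := by
  set x0 : Cantor := fun i => if h : i < d.length then d[i] else false with hx0
  set x1 : Cantor := fun i => if h : i < d.length then d[i] else true with hx1
  have hx0m : x0 ∈ cyl d := by rw [mem_cyl]; intro i hi; simp [hx0, hi]
  have hx1m : x1 ∈ cyl d := by rw [mem_cyl]; intro i hi; simp [hx1, hi]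
  have h0 := mem_cyl.mp (h hx0m)
  have h1 := mem_cyl.mp (h hx1m)
  have hlen : ω.length ≤ d.length := by
    by_contra hl
    push_neg at hl
    have e0 := h0 d.length hl
    have e1 := h1 d.length hl
    simp [hx0, hx1] at e0 e1
    exact absurd (e0.symm.trans e1) (by simp)
  refine ⟨d.drop ω.length, ?_⟩
  apply List.ext_getElem
  · simp; omega
  · intro i hi hi2
    rcases lt_or_ge i ω.length with hlt | hge
    · rw [List.getElem_append_left hlt]
      have := h0 i hlt
      simp [hx0, hi] at this
      exact this
    · rw [List.getElem_append_right hge]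
      rw [List.getElem_drop]
      congr 1; omega


/-- `f` is a disjoint union of finitely many members of `S_V` whose domains
partition `B_ω` (and whose codomains are pairwise disjoint, so `f` is injective). -/
def IsVMap (ω : List Bool) (f : Cantor → Cantor) : Prop :=
  ∃ (n : ℕ) (d c : Fin n → List Bool),
    (⋃ i, cyl (d i)) = cyl ω ∧
    (∀ i j, i ≠ j → Disjoint (cyl (d i)) (cyl (d j))) ∧
    (∀ i j, i ≠ j → Disjoint (cyl (c i)) (cyl (c j))) ∧
    (∀ i, ∀ x ∈ cyl (d i), f x = sigmaMap (d i) (c i) x)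

/-- A V-pair `(f, B_ω)`. -/
structure VPair where
  word : List Bool
  f : Cantor → Cantor
  isV : IsVMap word f

/-- `(f₁, B_{ω₁}) ∼ (f₂, B_{ω₂})`: there is `σ ∈ S_V` carrying `B_{ω₁}` bijectively
onto `B_{ω₂}` with `f₂ ∘ σ = f₁`; such a `σ` is necessarily `σ_{ω₁}^{ω₂}`. -/
def VEquiv (p q : VPair) : Prop :=
  ∀ x ∈ cyl p.word, q.f (sigmaMap p.word q.word x) = p.f x

/-- The V expansion set `𝓑_V`: equivalence classes `[f, B_ω]` of V-pairs. -/
def BV := Quot VEquiv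

noncomputable instance : DecidableEq BV := Classical.decEq BV

/-- `supp([f, B_ω]) = f(B_ω)` (computed from a chosen representative). -/
noncomputable def suppV (b : BV) : Set Cantor :=
  (Quot.out b).f '' cyl (Quot.out b).word

/-- `u = Bas(b)`: `u` is the contraction basin `{[f|_{B_{ω0}}, B_{ω0}], [f|_{B_{ω1}}, B_{ω1}]}`
of `b = [f, B_ω]`. -/
def IsBasV (b : BV) (u : Finset BV) : Prop :=
  ∃ p pl pr : VPair, Quot.mk VEquiv p = b ∧
    pl.word = p.word ++ [false] ∧ pl.f = p.f ∧
    pr.word = p.word ++ [true] ∧ pr.f = p.f ∧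
    u = {Quot.mk VEquiv pl, Quot.mk VEquiv pr}


-- ### equivalence
lemma vequiv_refl (p : VPair) : VEquiv p p := fun x hx => by rw [sigma_id hx]

lemma vequiv_symm {p q : VPair} (h : VEquiv p q) : VEquiv q p := by
  intro y hy
  have hx : sigmaMap q.word p.word y ∈ cyl p.word := sigma_mem' _ hy
  have := h _ hx
  rw [sigma_sigma, sigma_id hy] at this; exact this.symm

lemma vequiv_trans {p q r : VPair} (h1 : VEquiv p q) (h2 : VEquiv q r) : VEquiv p r := by
  intro x hx
  have hq : sigmaMap p.word q.word x ∈ cyl q.word := sigma_mem' _ hx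
  have := h2 _ hq
  rw [sigma_sigma] at this
  rw [this, h1 _ hx]

lemma vequiv_equivalence : Equivalence VEquiv :=
  ⟨vequiv_refl, vequiv_symm, vequiv_trans⟩

lemma quot_mk_eq_iff (p q : VPair) :
    (Quot.mk VEquiv p = Quot.mk VEquiv q) ↔ VEquiv p q := by
  rw [Quot.eq]
  exact vequiv_equivalence.eqvGen_iff

-- ### image invariance
lemma vequiv_image {p q : VPair} (h : VEquiv p q) :
    p.f '' cyl p.word = q.f '' cyl q.word := by
  ext y
  constructor
  · rintro ⟨x, hx, rfl⟩
    exact ⟨sigmaMap p.word q.word x, sigma_mem' _ hx, h x hx⟩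
  · rintro ⟨z, hz, rfl⟩
    refine ⟨sigmaMap q.word p.word z, sigma_mem' _ hz, ?_⟩
    have := h _ (sigma_mem' p.word hz)
    rw [sigma_sigma, sigma_id hz] at this; exact this.symm

lemma vequiv_left_image {p q : VPair} (h : VEquiv p q) :
    p.f '' cyl (p.word ++ [false]) = q.f '' cyl (q.word ++ [false]) := by
  ext y
  constructor
  · rintro ⟨x, hx, rfl⟩
    refine ⟨sigmaMap p.word q.word x, sigma_mem _ hx, ?_⟩
    exact h x (cyl_append_subset _ _ hx)
  · rintro ⟨z, hz, rfl⟩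
    refine ⟨sigmaMap q.word p.word z, sigma_mem _ hz, ?_⟩
    have := h _ (sigma_mem' p.word (cyl_append_subset _ _ hz))
    rw [sigma_sigma, sigma_id (cyl_append_subset _ _ hz)] at this; exact this.symm

noncomputable def Limg : BV → Set Cantor :=
  Quot.lift (fun p => p.f '' cyl (p.word ++ [false])) fun _ _ h => vequiv_left_image h

lemma suppV_out (b : BV) : suppV b = (Quot.out b).f '' cyl (Quot.out b).word := rfl

lemma suppV_mk (p : VPair) : suppV (Quot.mk VEquiv p) = p.f '' cyl p.word := by
  have h : VEquiv (Quot.out (Quot.mk VEquiv p)) p := by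
    rw [← quot_mk_eq_iff]
    exact Quot.out_eq _
  exact vequiv_image h

-- ### small cylinder lemmas
lemma mem_cyl_single {b : Bool} {x : Cantor} : x ∈ cyl [b] ↔ x 0 = b := by
  rw [mem_cyl]
  constructor
  · intro h; simpa using h 0 (by simp)
  · intro h i hi
    have : i = 0 := by simpa using hi
    subst this; simpa using h

lemma mem_cyl_snoc {ω : List Bool} {c : Bool} {x : Cantor}
    (hx : x ∈ cyl ω) (hc : x ω.length = c) : x ∈ cyl (ω ++ [c]) := by
  rw [mem_cyl] at hx ⊢
  intro i hi
  simp only [List.length_append, List.length_singleton] at hi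
  rcases lt_or_ge i ω.length with h | h
  · rw [List.getElem_append_left h]; exact hx i h
  · have : i = ω.length := by omega
    subst this
    rw [List.getElem_append_right (by omega)]
    simpa using hc

lemma cyl_nil : cyl [] = Set.univ := by
  ext x; simp [cyl]

lemma disjoint_cyl_bool : Disjoint (cyl [false]) (cyl [true]) := by
  rw [Set.disjoint_left]
  intro x h1 h2
  rw [mem_cyl_single] at h1 h2
  rw [h1] at h2
  exact Bool.false_ne_true h2

-- codomain cylinders sit inside the image
lemma cyl_cod_subset {ω : List Bool} {f : Cantor → Cantor} {n : ℕ}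
    {d c : Fin n → List Bool}
    (hu : (⋃ i, cyl (d i)) = cyl ω)
    (hf : ∀ i, ∀ x ∈ cyl (d i), f x = sigmaMap (d i) (c i) x) (i : Fin n) :
    cyl (c i) ⊆ f '' cyl ω := by
  intro y hy
  obtain ⟨x, hx, hxy⟩ := sigma_surj (α := d i) hy
  have hxω : x ∈ cyl ω := by
    rw [← hu]; exact Set.mem_iUnion.mpr ⟨i, hx⟩
  exact ⟨x, hxω, by rw [hf i x hx, hxy]⟩

-- ### the join
def joinF (p q : VPair) : Cantor → Cantor :=
  fun x => if x 0 = false then p.f (sigmaMap [false] p.word x)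
           else q.f (sigmaMap [true] q.word x)

lemma joinF_false {p q : VPair} {x : Cantor} (hx : x ∈ cyl [false]) :
    joinF p q x = p.f (sigmaMap [false] p.word x) := by
  rw [joinF, if_pos (mem_cyl_single.mp hx)]

lemma joinF_true {p q : VPair} {x : Cantor} (hx : x ∈ cyl [true]) :
    joinF p q x = q.f (sigmaMap [true] q.word x) := by
  rw [joinF, if_neg]
  simp [mem_cyl_single.mp hx]

lemma isVMap_half (p : VPair) (b : Bool) (g : Cantor → Cantor)
    (hg : ∀ x ∈ cyl [b], g x = p.f (sigmaMap [b] p.word x)) :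
    IsVMap [b] g := by
  obtain ⟨n, d, c, hu, hdd, hcc, hf⟩ := p.isV
  have hsub : ∀ i, ∃ t, d i = p.word ++ t := by
    intro i
    apply exists_suffix_of_cyl_subset
    rw [← hu]
    exact fun x hx => Set.mem_iUnion.mpr ⟨i, hx⟩
  choose t ht using hsub
  refine ⟨n, fun i => [b] ++ t i, c, ?_, ?_, hcc, ?_⟩
  · ext x
    simp only [Set.mem_iUnion]
    constructor
    · rintro ⟨i, hx⟩; exact cyl_append_subset _ _ hx
    · intro hx
      have hσ : sigmaMap [b] p.word x ∈ cyl p.word := sigma_mem' _ hx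
      rw [← hu] at hσ
      obtain ⟨i, hi⟩ := Set.mem_iUnion.mp hσ
      rw [ht i] at hi
      refine ⟨i, ?_⟩
      have := sigma_mem (α := p.word) [b] hi
      rwa [sigma_inv hx] at this
  · intro i j hij
    rw [Set.disjoint_left]
    intro x hxi hxj
    have hb : x ∈ cyl [b] := cyl_append_subset _ _ hxi
    have h1 : sigmaMap [b] p.word x ∈ cyl (p.word ++ t i) := sigma_mem _ hxi
    have h2 : sigmaMap [b] p.word x ∈ cyl (p.word ++ t j) := sigma_mem _ hxj
    rw [← ht i] at h1; rw [← ht j] at h2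
    exact Set.disjoint_left.mp (hdd i j hij) h1 h2
  · intro i x hx
    have hb : x ∈ cyl [b] := cyl_append_subset _ _ hx
    have hσ : sigmaMap [b] p.word x ∈ cyl (d i) := by
      rw [ht i]; exact sigma_mem _ hx
    rw [hg x hb, hf i _ hσ, ht i, sigma_append]

lemma joinF_isVMap_false (p q : VPair) : IsVMap [false] (joinF p q) :=
  isVMap_half p false _ (fun _ hx => joinF_false hx)

lemma joinF_isVMap_true (p q : VPair) : IsVMap [true] (joinF p q) :=
  isVMap_half q true _ (fun _ hx => joinF_true hx)

def joinL (p q : VPair) : VPair := ⟨[false], joinF p q, joinF_isVMap_false p q⟩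
def joinR (p q : VPair) : VPair := ⟨[true], joinF p q, joinF_isVMap_true p q⟩

lemma joinL_equiv (p q : VPair) : VEquiv (joinL p q) p := by
  intro x hx
  exact (joinF_false hx).symm

lemma joinR_equiv (p q : VPair) : VEquiv (joinR p q) q := by
  intro x hx
  exact (joinF_true hx).symm

lemma joinF_image_false (p q : VPair) :
    joinF p q '' cyl [false] = p.f '' cyl p.word := by
  have := vequiv_image (joinL_equiv p q)
  simpa [joinL] using this

lemma joinF_image_true (p q : VPair) :
    joinF p q '' cyl [true] = q.f '' cyl q.word := by
  have := vequiv_image (joinR_equiv p q)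
  simpa [joinR] using this

lemma joinF_isVMap_nil (p q : VPair)
    (hpq : Disjoint (p.f '' cyl p.word) (q.f '' cyl q.word)) :
    IsVMap [] (joinF p q) := by
  obtain ⟨n₁, d₁, c₁, hu₁, hdd₁, hcc₁, hf₁⟩ := joinF_isVMap_false p q
  obtain ⟨n₂, d₂, c₂, hu₂, hdd₂, hcc₂, hf₂⟩ := joinF_isVMap_true p q
  have hc₁img : ∀ i, cyl (c₁ i) ⊆ p.f '' cyl p.word := by
    intro i
    rw [← joinF_image_false p q]
    exact cyl_cod_subset hu₁ hf₁ i
  have hc₂img : ∀ i, cyl (c₂ i) ⊆ q.f '' cyl q.word := by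
    intro i
    rw [← joinF_image_true p q]
    exact cyl_cod_subset hu₂ hf₂ i
  have hd₁sub : ∀ i, cyl (d₁ i) ⊆ cyl [false] := by
    intro i; rw [← hu₁]; exact fun x hx => Set.mem_iUnion.mpr ⟨i, hx⟩
  have hd₂sub : ∀ i, cyl (d₂ i) ⊆ cyl [true] := by
    intro i; rw [← hu₂]; exact fun x hx => Set.mem_iUnion.mpr ⟨i, hx⟩
  refine ⟨n₁ + n₂,
    (fun i => if h : i.1 < n₁ then d₁ ⟨i.1, h⟩ else d₂ ⟨i.1 - n₁, by omega⟩),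
    (fun i => if h : i.1 < n₁ then c₁ ⟨i.1, h⟩ else c₂ ⟨i.1 - n₁, by omega⟩),
    ?_, ?_, ?_, ?_⟩
  · rw [cyl_nil]
    ext x
    simp only [Set.mem_iUnion, Set.mem_univ, iff_true]
    rcases Bool.eq_false_or_eq_true (x 0) with hx0 | hx0
    swap
    · have hx : x ∈ cyl [false] := mem_cyl_single.mpr hx0
      rw [← hu₁] at hx
      obtain ⟨i, hi⟩ := Set.mem_iUnion.mp hx
      exact ⟨⟨i.1, by omega⟩, by simp [i.2]; exact hi⟩
    · have hx : x ∈ cyl [true] := mem_cyl_single.mpr hx0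
      rw [← hu₂] at hx
      obtain ⟨i, hi⟩ := Set.mem_iUnion.mp hx
      refine ⟨⟨n₁ + i.1, by omega⟩, ?_⟩
      have hnlt : ¬ (n₁ + i.1 < n₁) := by omega
      simp only [hnlt, dif_neg]
      have : n₁ + i.1 - n₁ = i.1 := by omega
      simpa [this] using hi
  · intro i j hij
    by_cases hi : i.1 < n₁ <;> by_cases hj : j.1 < n₁ <;>
      simp only [hi, hj, dif_pos, dif_neg, not_false_iff]
    · exact hdd₁ _ _ (by simp [Fin.ext_iff]; omega)
    · exact Set.disjoint_of_subset (hd₁sub _) (hd₂sub _) disjoint_cyl_bool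
    · exact Set.disjoint_of_subset (hd₂sub _) (hd₁sub _) disjoint_cyl_bool.symm
    · exact hdd₂ _ _ (by simp [Fin.ext_iff]; omega)
  · intro i j hij
    by_cases hi : i.1 < n₁ <;> by_cases hj : j.1 < n₁ <;>
      simp only [hi, hj, dif_pos, dif_neg, not_false_iff]
    · exact hcc₁ _ _ (by simp [Fin.ext_iff]; omega)
    · exact Set.disjoint_of_subset (hc₁img _) (hc₂img _) hpq
    · exact Set.disjoint_of_subset (hc₂img _) (hc₁img _) hpq.symm
    · exact hcc₂ _ _ (by simp [Fin.ext_iff]; omega)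
  · intro i x hx
    by_cases hi : i.1 < n₁
    · simp only [hi, dif_pos] at hx ⊢
      exact hf₁ _ x hx
    · simp only [hi, dif_neg, not_false_iff] at hx ⊢
      exact hf₂ _ x hx

def joinV (p q : VPair)
    (hpq : Disjoint (p.f '' cyl p.word) (q.f '' cyl q.word)) : VPair :=
  ⟨[], joinF p q, joinF_isVMap_nil p q hpq⟩

lemma isBas_join (p q : VPair)
    (hpq : Disjoint (p.f '' cyl p.word) (q.f '' cyl q.word)) :
    IsBasV (Quot.mk VEquiv (joinV p q hpq)) {Quot.mk VEquiv p, Quot.mk VEquiv q} := by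
  refine ⟨joinV p q hpq, joinL p q, joinR p q, rfl, rfl, rfl, rfl, rfl, ?_⟩
  rw [Quot.sound (joinL_equiv p q), Quot.sound (joinR_equiv p q)]

lemma limg_join (p q : VPair)
    (hpq : Disjoint (p.f '' cyl p.word) (q.f '' cyl q.word)) :
    Limg (Quot.mk VEquiv (joinV p q hpq)) = p.f '' cyl p.word := by
  show joinF p q '' cyl ([] ++ [false]) = p.f '' cyl p.word
  rw [List.nil_append]
  exact joinF_image_false p q

lemma uniq_join (p q : VPair)
    (hpq : Disjoint (p.f '' cyl p.word) (q.f '' cyl q.word))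
    (r rl rr : VPair)
    (hlw : rl.word = r.word ++ [false]) (hlf : rl.f = r.f)
    (hrw : rr.word = r.word ++ [true]) (hrf : rr.f = r.f)
    (h1 : Quot.mk VEquiv rl = Quot.mk VEquiv (joinL p q))
    (h2 : Quot.mk VEquiv rr = Quot.mk VEquiv (joinR p q)) :
    Quot.mk VEquiv r = Quot.mk VEquiv (joinV p q hpq) := by
  rw [quot_mk_eq_iff] at h1 h2 ⊢
  intro x hx
  rcases Bool.eq_false_or_eq_true (x r.word.length) with hc | hc
  swap
  · have hx' : x ∈ cyl (r.word ++ [false]) := mem_cyl_snoc hx hc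
    have := h1 x (by rwa [hlw])
    rw [hlw, hlf] at this
    have hσ : sigmaMap (r.word ++ [false]) (joinL p q).word x = sigmaMap r.word [] x := by
      show sigmaMap (r.word ++ [false]) ([] ++ [false]) x = _
      exact sigma_snoc hx'
    rw [hσ] at this
    exact this
  · have hx' : x ∈ cyl (r.word ++ [true]) := mem_cyl_snoc hx hc
    have := h2 x (by rwa [hrw])
    rw [hrw, hrf] at this
    have hσ : sigmaMap (r.word ++ [true]) (joinR p q).word x = sigmaMap r.word [] x := by
      show sigmaMap (r.word ++ [true]) ([] ++ [true]) x = _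
      exact sigma_snoc hx'
    rw [hσ] at this
    exact this


/-- A vertex of `𝓑_V`. -/
def VIsVertex (v : Finset BV) : Prop :=
  ∀ b₁ ∈ v, ∀ b₂ ∈ v, b₁ ≠ b₂ → Disjoint (suppV b₁) (suppV b₂)

def vsuppV (v : Finset BV) : Set Cantor := ⋃ b ∈ v, suppV b

/-- One expansion step: replace `b ∈ v` by its contraction basin. -/
def stepV (v v' : Finset BV) : Prop :=
  ∃ b ∈ v, ∃ u : Finset BV, IsBasV b u ∧ v' = v.erase b ∪ u

/-- The ascending-path relation `⪯` on vertices of `𝓑_V`. -/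
def precV : Finset BV → Finset BV → Prop := Relation.ReflTransGen stepV

/-- every two-element vertex `{b₁, b₂}` of `𝓑_V` is the contraction basin
of exactly two elements of `𝓑_V`. -/
theorem BV_basin_two_preimages (b₁ b₂ : BV) (hne : b₁ ≠ b₂)
    (hdisj : Disjoint (suppV b₁) (suppV b₂)) :
    {b : BV | IsBasV b {b₁, b₂}}.ncard = 2 := by
  set p₁ := Quot.out b₁ with hp₁
  set p₂ := Quot.out b₂ with hp₂
  have hmk₁ : Quot.mk VEquiv p₁ = b₁ := Quot.out_eq b₁
  have hmk₂ : Quot.mk VEquiv p₂ = b₂ := Quot.out_eq b₂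
  have hpq : Disjoint (p₁.f '' cyl p₁.word) (p₂.f '' cyl p₂.word) := hdisj
  set B₁ := Quot.mk VEquiv (joinV p₁ p₂ hpq) with hB₁
  set B₂ := Quot.mk VEquiv (joinV p₂ p₁ hpq.symm) with hB₂
  have hBne : B₁ ≠ B₂ := by
    intro h
    have hL : Limg B₁ = Limg B₂ := by rw [h]
    rw [hB₁, hB₂, limg_join, limg_join] at hL
    have hnonempty : (p₁.f '' cyl p₁.word).Nonempty :=
      (cyl_nonempty p₁.word).image _
    have h2 := hpq
    rw [hL] at h2
    have h3 : p₂.f '' cyl p₂.word = ∅ := disjoint_self.mp h2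
    rw [hL, h3] at hnonempty
    exact Set.not_nonempty_empty hnonempty
  have hset : {b : BV | IsBasV b {b₁, b₂}} = {B₁, B₂} := by
    ext b
    simp only [Set.mem_setOf_eq, Set.mem_insert_iff, Set.mem_singleton_iff]
    constructor
    · rintro ⟨r, rl, rr, hb, hlw, hlf, hrw, hrf, hu⟩
      have hrl_mem : Quot.mk VEquiv rl ∈ ({b₁, b₂} : Finset BV) := by
        rw [hu]; exact Finset.mem_insert_self (α := BV) _ _
      have hrr_mem : Quot.mk VEquiv rr ∈ ({b₁, b₂} : Finset BV) := by
        rw [hu]; exact Finset.mem_insert_of_mem (α := BV) (Finset.mem_singleton_self _)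
      have hb₁_mem : b₁ ∈ ({b₁, b₂} : Finset BV) := Finset.mem_insert_self _ _
      have hb₂_mem : b₂ ∈ ({b₁, b₂} : Finset BV) :=
        Finset.mem_insert_of_mem (Finset.mem_singleton_self _)
      rw [hu] at hb₁_mem hb₂_mem
      replace hrl_mem := ((Finset.mem_insert (α := BV)).mp hrl_mem).imp id (Finset.mem_singleton (α := BV)).mp
      replace hrr_mem := ((Finset.mem_insert (α := BV)).mp hrr_mem).imp id (Finset.mem_singleton (α := BV)).mp
      replace hb₁_mem := ((Finset.mem_insert (α := BV)).mp hb₁_mem).imp id (Finset.mem_singleton (α := BV)).mp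
      replace hb₂_mem := ((Finset.mem_insert (α := BV)).mp hb₂_mem).imp id (Finset.mem_singleton (α := BV)).mp
      have hcases : (Quot.mk VEquiv rl = b₁ ∧ Quot.mk VEquiv rr = b₂) ∨
          (Quot.mk VEquiv rl = b₂ ∧ Quot.mk VEquiv rr = b₁) := by
        rcases hrl_mem with h | h
        · rcases hrr_mem with h' | h'
          · exfalso
            apply hne
            rcases hb₂_mem with h'' | h''
            · rw [h'', h]
            · rw [h'', h']
          · exact Or.inl ⟨h, h'⟩
        · rcases hrr_mem with h' | h'
          · exact Or.inr ⟨h, h'⟩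
          · exfalso
            apply hne
            rcases hb₁_mem with h'' | h''
            · rw [h'', h]
            · rw [h'', h']
      rcases hcases with ⟨h1, h2⟩ | ⟨h1, h2⟩
      · left
        rw [← hb, hB₁]
        refine uniq_join p₁ p₂ hpq r rl rr hlw hlf hrw hrf ?_ ?_
        · rw [h1, ← hmk₁]; exact (Quot.sound (joinL_equiv p₁ p₂)).symm
        · rw [h2, ← hmk₂]; exact (Quot.sound (joinR_equiv p₁ p₂)).symm
      · right
        rw [← hb, hB₂]
        refine uniq_join p₂ p₁ hpq.symm r rl rr hlw hlf hrw hrf ?_ ?_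
        · rw [h1, ← hmk₂]; exact (Quot.sound (joinL_equiv p₂ p₁)).symm
        · rw [h2, ← hmk₁]; exact (Quot.sound (joinR_equiv p₂ p₁)).symm
    · rintro (rfl | rfl)
      · have := isBas_join p₁ p₂ hpq
        rwa [hmk₁, hmk₂] at this
      · have := isBas_join p₂ p₁ hpq.symm
        rw [hmk₁, hmk₂] at this
        exact Finset.pair_comm b₂ b₁ ▸ this
  rw [hset]
  exact Set.ncard_pair hBne
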